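/- For any two distinct vertices i ≠ j of V, the entry 𝕋 j i of the generic response matrix is nonzero if and only if the pair (i,j) belongs to the transitive closure of the edge relation of (V,E), i.e., if and only if there is a directed path from i to j. -/

import Mathlib

open Matrix

/-- The generic network matrix `𝔾` over the fraction field of `ℝ[Xₑ : e ∈ E]`:
`𝔾 j i = X (i,j)` if `(i,j) ∈ E`, and `0` otherwise. -/
noncomputable def genG {V : Type*} [Fintype V] [DecidableEq V] (E : Finset (V × V)) :
    Matrix V V (FractionRing (MvPolynomial {e : V × V // e ∈ E} ℝ)) :=
  Matrix.of fun j i =>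
    if h : (i, j) ∈ E then
      algebraMap (MvPolynomial {e : V × V // e ∈ E} ℝ) _ (MvPolynomial.X ⟨(i, j), h⟩)
    else 0

/-- The generic response matrix `𝕋 = (I - 𝔾)⁻¹`. -/
noncomputable def genT {V : Type*} [Fintype V] [DecidableEq V] (E : Finset (V × V)) :
    Matrix V V (FractionRing (MvPolynomial {e : V × V // e ∈ E} ℝ)) :=
  (1 - genG E)⁻¹

lemma det_one_sub_ne_zero {R S : Type*} [CommRing R] [CommRing S] [Nontrivial S]
    {W : Type*} [Fintype W] [DecidableEq W]
    (φ : R →+* S) (M : Matrix W W R) (h : ∀ a b, φ (M a b) = 0) :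
    (1 - M).det ≠ 0 := by
  intro h0
  have hmap : φ.mapMatrix (1 - M) = 1 := by
    ext a b
    simp [RingHom.mapMatrix_apply, Matrix.map_apply, Matrix.sub_apply, h,
      Matrix.one_apply, apply_ite φ]
  have : φ ((1 - M).det) = 1 := by
    rw [RingHom.map_det, hmap, Matrix.det_one]
  rw [h0, map_zero] at this
  exact zero_ne_one this

namespace Stmt3Aux

variable {V : Type*} [Fintype V] [DecidableEq V] (E : Finset (V × V))

/-- The polynomial-entried generic network matrix. -/
noncomputable def Gp : Matrix V V (MvPolynomial {e : V × V // e ∈ E} ℝ) :=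
  Matrix.of fun j i => if h : (i, j) ∈ E then MvPolynomial.X ⟨(i, j), h⟩ else 0

local notation "R" => MvPolynomial {e : V × V // e ∈ E} ℝ
local notation "K" => FractionRing (MvPolynomial {e : V × V // e ∈ E} ℝ)

lemma genG_eq : genG E = (algebraMap R K).mapMatrix (Gp E) := by
  ext j i
  simp only [genG, Gp, RingHom.mapMatrix_apply, Matrix.map_apply, Matrix.of_apply]
  split <;> simp

set_option linter.unusedSectionVars false in
lemma constantCoeff_Gp (a b : V) : MvPolynomial.constantCoeff (Gp E a b) = 0 := by
  simp only [Gp, Matrix.of_apply]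
  split <;> simp

lemma det_Gp_ne : (1 - Gp E).det ≠ 0 :=
  det_one_sub_ne_zero MvPolynomial.constantCoeff _ (constantCoeff_Gp E)

lemma one_sub_genG_eq : (1 : Matrix V V K) - genG E = (algebraMap R K).mapMatrix (1 - Gp E) := by
  rw [genG_eq, map_sub, _root_.map_one]

lemma det_genG_ne : (1 - genG E).det ≠ 0 := by
  rw [one_sub_genG_eq, ← RingHom.map_det]
  intro h
  exact det_Gp_ne E (IsFractionRing.injective R K (by rw [h, map_zero]))

lemma genT_ne_iff (i j : V) :
    genT E j i ≠ 0 ↔ (1 - Gp E).adjugate j i ≠ 0 := by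
  have hdet := det_genG_ne E
  rw [genT, Matrix.inv_def, Matrix.smul_apply, smul_eq_mul]
  rw [mul_ne_zero_iff]
  constructor
  · rintro ⟨-, h2⟩
    intro h0
    apply h2
    have : (1 - genG E).adjugate = (algebraMap R K).mapMatrix ((1 - Gp E).adjugate) := by
      rw [one_sub_genG_eq, RingHom.map_adjugate]
    rw [this, RingHom.mapMatrix_apply, Matrix.map_apply, h0, map_zero]
  · intro h
    refine ⟨?_, ?_⟩
    · rw [Ring.inverse_eq_inv']
      exact inv_ne_zero hdet
    · rw [one_sub_genG_eq, ← RingHom.map_adjugate, RingHom.mapMatrix_apply, Matrix.map_apply]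
      intro h0
      exact h (IsFractionRing.injective R K (by rw [h0, map_zero]))

lemma forward (i j : V) (hij : i ≠ j)
    (hpath : ¬ Relation.TransGen (fun a b : V => (a, b) ∈ E) i j) :
    genT E j i = 0 := by
  classical
  set r : V → V → Prop := fun a b => (a, b) ∈ E with hr
  set p : V → Prop := fun v => ¬(v = i ∨ Relation.TransGen r i v) with hp
  have hdet : IsUnit (1 - genG E).det := (det_genG_ne E).isUnit
  have hTeq : (1 - genG E) * genT E = 1 := Matrix.mul_nonsing_inv _ hdet
  -- recursion for unreachable vertices
  have key : ∀ v, p v → genT E v i = ∑ k : V, genG E v k * genT E k i := by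
    intro v hv
    have h1 : ((1 - genG E) * genT E) v i = (1 : Matrix V V K) v i := by rw [hTeq]
    have hvi : v ≠ i := fun h => hv (Or.inl h)
    rw [Matrix.one_apply_ne hvi, Matrix.sub_mul, Matrix.one_mul, Matrix.sub_apply,
      Matrix.mul_apply, sub_eq_zero] at h1
    exact h1
  have key2 : ∀ v, p v → genT E v i = ∑ k : {k : V // p k}, genG E v k * genT E (k : V) i := by
    intro v hv
    rw [key v hv, ← Finset.sum_filter_add_sum_filter_not Finset.univ p
      (fun k => genG E v k * genT E k i)]
    have hz : ∑ k ∈ Finset.univ.filter (fun k => ¬ p k),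
        genG E v k * genT E k i = 0 := by
      apply Finset.sum_eq_zero
      intro k hk
      simp only [Finset.mem_filter] at hk
      have hk' : k = i ∨ Relation.TransGen r i k := not_not.mp hk.2
      have hGz : genG E v k = 0 := by
        simp only [genG, Matrix.of_apply]
        rw [dif_neg]
        intro hkv
        apply hv
        right
        rcases hk' with h | h
        · exact Relation.TransGen.single (h ▸ hkv)
        · exact h.tail hkv
      rw [hGz, zero_mul]
    rw [hz, add_zero]
    exact Finset.sum_subtype _ (by simp) _
  -- the homogeneous system
  let B : Matrix {k : V // p k} {k : V // p k} K :=
    (genG E).submatrix Subtype.val Subtype.val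
  let w : {k : V // p k} → K := fun k => genT E (k : V) i
  have hw : (1 - B) *ᵥ w = 0 := by
    funext v
    show ((1 - B) *ᵥ w) v = 0
    rw [Matrix.sub_mulVec, Matrix.one_mulVec, Pi.sub_apply, sub_eq_zero]
    show w v = ∑ k, B v k * w k
    exact key2 v v.2
  have hdetB : (1 - B).det ≠ 0 := by
    have hB : (1 : Matrix {k : V // p k} {k : V // p k} K) - B =
        (algebraMap R K).mapMatrix ((1 : Matrix {k : V // p k} {k : V // p k}
          (MvPolynomial {e : V × V // e ∈ E} ℝ)) - (Gp E).submatrix Subtype.val Subtype.val) := by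
      rw [map_sub, _root_.map_one]
      congr 1
      ext a b
      simp [B, genG_eq, RingHom.mapMatrix_apply, Matrix.submatrix_apply, Matrix.map_apply]
    rw [hB, ← RingHom.map_det]
    intro h
    have := det_one_sub_ne_zero MvPolynomial.constantCoeff
      ((Gp E).submatrix (Subtype.val : {k : V // p k} → V) Subtype.val)
      (fun a b => constantCoeff_Gp E _ _)
    exact this (IsFractionRing.injective R K (by rw [h, map_zero]))
  have hwz : w = 0 := by
    have hU : IsUnit (1 - B).det := hdetB.isUnit
    calc w = ((1 - B)⁻¹ * (1 - B)) *ᵥ w := by rw [Matrix.nonsing_inv_mul _ hU, Matrix.one_mulVec]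
    _ = (1 - B)⁻¹ *ᵥ ((1 - B) *ᵥ w) := by rw [Matrix.mulVec_mulVec]
    _ = 0 := by rw [hw, Matrix.mulVec_zero]
  have hjp : p j := by
    intro h
    rcases h with h | h
    · exact hij h.symm
    · exact hpath h
  have := congrFun hwz ⟨j, hjp⟩
  simpa [w] using this

section Backward

/-- Real adjacency matrix (in the same `(j,i)` convention as `genG`). -/
def Adj : Matrix V V ℝ := Matrix.of fun b a => if (a, b) ∈ E then (1 : ℝ) else 0

set_option linter.unusedSectionVars false in
lemma Adj_pow_nonneg : ∀ (k : ℕ) (b a : V), 0 ≤ (Adj E ^ k) b a := by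
  intro k
  induction k with
  | zero =>
    intro b a
    simp only [pow_zero]
    rcases eq_or_ne b a with h | h
    · simp [Matrix.one_apply, h]
    · simp [Matrix.one_apply, h]
  | succ n ih =>
    intro b a
    rw [pow_succ, Matrix.mul_apply]
    apply Finset.sum_nonneg
    intro c _
    apply mul_nonneg (ih b c)
    simp only [Adj, Matrix.of_apply]
    split <;> norm_num

set_option linter.unusedSectionVars false in
lemma Adj_pow_pos {i j : V} (h : Relation.TransGen (fun a b : V => (a, b) ∈ E) i j) :
    ∃ k, 0 < (Adj E ^ k) j i := by
  induction h with
  | single hedge =>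
    refine ⟨1, ?_⟩
    rw [pow_one]
    simp [Adj, hedge]
  | @tail b c hib hedge ih =>
    obtain ⟨k, hk⟩ := ih
    refine ⟨k + 1, ?_⟩
    rw [pow_succ', Matrix.mul_apply]
    have hterm : 0 < Adj E c b * (Adj E ^ k) b i := by
      have hcb : Adj E c b = 1 := by simp [Adj, hedge]
      rw [hcb, one_mul]
      exact hk
    refine Finset.sum_pos' (fun d _ => mul_nonneg ?_ (Adj_pow_nonneg E k d i))
      ⟨b, Finset.mem_univ b, hterm⟩
    simp only [Adj, Matrix.of_apply]
    split <;> norm_num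

end Backward

lemma backward {i j : V} (h : Relation.TransGen (fun a b : V => (a, b) ∈ E) i j) :
    (1 - Gp E).adjugate j i ≠ 0 := by
  classical
  let φ : MvPolynomial {e : V × V // e ∈ E} ℝ →+* PowerSeries ℝ :=
    (MvPolynomial.aeval (fun _ : {e : V × V // e ∈ E} => (PowerSeries.X : PowerSeries ℝ))).toRingHom
  let N : Matrix V V (PowerSeries ℝ) :=
    Matrix.of fun b a => if (a, b) ∈ E then PowerSeries.X else 0
  have hmap : φ.mapMatrix (1 - Gp E) = 1 - N := by
    rw [map_sub, _root_.map_one]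
    congr 1
    ext b a
    simp only [RingHom.mapMatrix_apply, Matrix.map_apply, Gp, Matrix.of_apply, N]
    split <;> simp [φ]
  let M : Matrix V V (PowerSeries ℝ) :=
    Matrix.of fun b a => PowerSeries.mk fun k => (Adj E ^ k) b a
  have hinv : (1 - N) * M = 1 := by
    ext b a k
    rw [Matrix.sub_mul, Matrix.one_mul, Matrix.sub_apply, map_sub]
    have hNM : (N * M) b a = ∑ c, (if (c, b) ∈ E then PowerSeries.X * M c a else 0) := by
      rw [Matrix.mul_apply]
      apply Finset.sum_congr rfl
      intro c _
      simp only [N, Matrix.of_apply]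
      split <;> simp
    have hMcoeff : ∀ (m : ℕ) (b a : V), (PowerSeries.coeff m) (M b a) = (Adj E ^ m) b a := by
      intro m b a
      simp [M, PowerSeries.coeff_mk]
    rw [hNM, map_sum]
    cases k with
    | zero =>
      have hsum : ∑ c, (PowerSeries.coeff 0) (if (c, b) ∈ E then PowerSeries.X * M c a else 0)
          = 0 := by
        apply Finset.sum_eq_zero
        intro c _
        split
        · exact PowerSeries.coeff_zero_X_mul _
        · exact map_zero _
      rw [hsum, hMcoeff, sub_zero, pow_zero]
      rcases eq_or_ne b a with hba | hba
      · simp [hba, Matrix.one_apply]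
      · simp [Matrix.one_apply_ne hba]
    | succ m =>
      have hsum : ∑ c, (PowerSeries.coeff (m + 1)) (if (c, b) ∈ E then PowerSeries.X * M c a else 0)
          = ∑ c, (if (c, b) ∈ E then (Adj E ^ m) c a else 0) := by
        apply Finset.sum_congr rfl
        intro c _
        split
        · rw [PowerSeries.coeff_succ_X_mul, hMcoeff]
        · exact map_zero _
      have hpow : (Adj E ^ (m + 1)) b a = ∑ c, (if (c, b) ∈ E then (Adj E ^ m) c a else 0) := by
        rw [pow_succ', Matrix.mul_apply]
        apply Finset.sum_congr rfl
        intro c _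
        simp only [Adj, Matrix.of_apply]
        split <;> simp
      rw [hsum, hMcoeff, ← hpow, sub_self]
      rcases eq_or_ne b a with hba | hba
      · simp [hba, Matrix.one_apply, PowerSeries.coeff_one]
      · simp [Matrix.one_apply_ne hba]
  have hadj : (1 - N).adjugate = (1 - N).det • M := by
    calc (1 - N).adjugate = (1 - N).adjugate * ((1 - N) * M) := by rw [hinv, mul_one]
    _ = ((1 - N).adjugate * (1 - N)) * M := by rw [mul_assoc]
    _ = ((1 - N).det • 1) * M := by rw [Matrix.adjugate_mul]
    _ = (1 - N).det • M := by rw [Matrix.smul_mul, Matrix.one_mul]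
  have hdetN : (1 - N).det ≠ 0 := by
    apply det_one_sub_ne_zero ((PowerSeries.constantCoeff : PowerSeries ℝ →+* ℝ)) N
    intro a b
    simp only [N, Matrix.of_apply]
    split <;> simp
  have hM : M j i ≠ 0 := by
    obtain ⟨k, hk⟩ := Adj_pow_pos E h
    intro h0
    have hc : (PowerSeries.coeff k) (M j i) = 0 := by rw [h0, map_zero]
    simp only [M, Matrix.of_apply, PowerSeries.coeff_mk] at hc
    exact hk.ne' hc
  intro h0
  have hφ : φ ((1 - Gp E).adjugate j i) = (1 - N).adjugate j i := by
    have := RingHom.map_adjugate φ (1 - Gp E)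
    rw [hmap] at this
    rw [← this]
    rfl
  rw [h0, map_zero] at hφ
  rw [hadj, Matrix.smul_apply, smul_eq_mul] at hφ
  exact (mul_ne_zero hdetN hM) hφ.symm

end Stmt3Aux

/-- For distinct vertices `i ≠ j`, the generic entry `𝕋 j i` is nonzero iff there is a
directed path from `i` to `j`, i.e. iff `(i,j)` is in the transitive closure of `E`. -/
theorem stmt_3 {V : Type*} [Fintype V] [DecidableEq V]
    (E : Finset (V × V)) (hloop : ∀ i : V, (i, i) ∉ E) :
    ∀ i j : V, i ≠ j →
      (genT E j i ≠ 0 ↔ Relation.TransGen (fun a b : V => (a, b) ∈ E) i j) := by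
  intro i j hij
  constructor
  · intro hT
    by_contra hpath
    exact hT (Stmt3Aux.forward E i j hij hpath)
  · intro h
    rw [Stmt3Aux.genT_ne_iff]
    exact Stmt3Aux.backward E h
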